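/- arXiv:1509.00921 — 2 statements merged into one kernel-verified Lean document; each statement's English description precedes it below -/
import Mathlib

section
/- Let Λ be a ring and C_* a chain complex of finitely generated free Λ-modules (bounded below at degree 0). If H_i(C_*) = 0 for all i ≤ k, then ker ∂_i is a finitely generated stably free Λ-module for all i ≤ k+1. -/
/-- A module is stably free if adding a finitely generated free module makes it free. -/
def StablyFree (Λ : Type*) [Ring Λ] (P : Type*) [AddCommGroup P] [Module Λ P] : Prop :=
  ∃ n m : ℕ, Nonempty ((P × (Fin n → Λ)) ≃ₗ[Λ] (Fin m → Λ))

section Aux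

variable {Λ : Type*} [Ring Λ]

noncomputable def finProdEquiv (a b : ℕ) :
    ((Fin a → Λ) × (Fin b → Λ)) ≃ₗ[Λ] (Fin (a + b) → Λ) :=
  ((LinearEquiv.funCongrLeft Λ Λ finSumFinEquiv).trans
    (LinearEquiv.sumArrowLequivProdArrow _ _ Λ Λ)).symm

lemma exists_equiv_fin (P : Type*) [AddCommGroup P] [Module Λ P]
    [Module.Finite Λ P] [Module.Free Λ P] :
    ∃ m : ℕ, Nonempty (P ≃ₗ[Λ] (Fin m → Λ)) := by
  let b := Module.Free.chooseBasis Λ P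
  exact ⟨_, ⟨(b.reindex (Fintype.equivFin _)).equivFun⟩⟩

lemma stablyFree_of_equiv_fun {P : Type*} [AddCommGroup P] [Module Λ P]
    (m : ℕ) (e : P ≃ₗ[Λ] (Fin m → Λ)) : StablyFree Λ P :=
  ⟨0, m + 0, ⟨(e.prodCongr (LinearEquiv.refl Λ (Fin 0 → Λ))).trans (finProdEquiv m 0)⟩⟩

/-- split exact: F ≃ ker f × P given a section. -/
noncomputable def splitEquiv {F P : Type*} [AddCommGroup F] [Module Λ F]
    [AddCommGroup P] [Module Λ P] (f : F →ₗ[Λ] P) (s : P →ₗ[Λ] F)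
    (hs : f.comp s = LinearMap.id) : F ≃ₗ[Λ] (LinearMap.ker f × P) := by
  have hs' : ∀ p, f (s p) = p := fun p => congrFun (congrArg DFunLike.coe hs) p
  refine LinearEquiv.ofLinear
    (LinearMap.prod ((LinearMap.id - s.comp f).codRestrict (LinearMap.ker f)
      (fun x => by simp [hs'])) f)
    (LinearMap.coprod (LinearMap.ker f).subtype s) ?_ ?_
  · apply LinearMap.ext; rintro ⟨⟨x, hx⟩, p⟩
    have hx' : f x = 0 := hx
    ext
    · simp [hx', hs']
    · simp [hx', hs']
  · apply LinearMap.ext; intro x; simp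

lemma key {F P : Type*} [AddCommGroup F] [Module Λ F] [Module.Finite Λ F]
    [Module.Free Λ F] [AddCommGroup P] [Module Λ P]
    (f : F →ₗ[Λ] P) (hf : Function.Surjective f) (hP : StablyFree Λ P) :
    Module.Finite Λ (LinearMap.ker f) ∧ StablyFree Λ (LinearMap.ker f) := by
  obtain ⟨n, m, ⟨e⟩⟩ := hP
  have hproj : Module.Projective Λ P :=
    Module.Projective.of_split (e.toLinearMap.comp (LinearMap.inl Λ P (Fin n → Λ)))
      ((LinearMap.fst Λ P (Fin n → Λ)).comp e.symm.toLinearMap)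
      (by apply LinearMap.ext; intro p; simp)
  obtain ⟨s, hs⟩ := Module.projective_lifting_property f LinearMap.id hf
  have eq1 : F ≃ₗ[Λ] (LinearMap.ker f × P) := splitEquiv f s hs
  constructor
  · exact Module.Finite.of_surjective
      ((LinearMap.fst Λ (LinearMap.ker f) P).comp eq1.toLinearMap)
      ((Prod.fst_surjective).comp eq1.surjective)
  · obtain ⟨a, ⟨eF⟩⟩ := exists_equiv_fin (Λ := Λ) F
    -- ker f × Λ^m ≃ ker f × (P × Λ^n) ≃ (ker f × P) × Λ^n ≃ F × Λ^n ≃ Λ^a × Λ^n ≃ Λ^(a+n)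
    have E1 : ((↥(LinearMap.ker f)) × (Fin m → Λ)) ≃ₗ[Λ] ((↥(LinearMap.ker f)) × (P × (Fin n → Λ))) :=
      LinearEquiv.prodCongr (LinearEquiv.refl Λ _) e.symm
    have E2 : ((↥(LinearMap.ker f)) × (P × (Fin n → Λ))) ≃ₗ[Λ]
        (((↥(LinearMap.ker f)) × P) × (Fin n → Λ)) :=
      (LinearEquiv.prodAssoc Λ (LinearMap.ker f) P (Fin n → Λ)).symm
    have E3 : (((↥(LinearMap.ker f)) × P) × (Fin n → Λ)) ≃ₗ[Λ] (F × (Fin n → Λ)) :=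
      LinearEquiv.prodCongr eq1.symm (LinearEquiv.refl Λ _)
    have E4 : (F × (Fin n → Λ)) ≃ₗ[Λ] ((Fin a → Λ) × (Fin n → Λ)) :=
      LinearEquiv.prodCongr eF (LinearEquiv.refl Λ _)
    exact ⟨m, a + n, ⟨E1.trans (E2.trans (E3.trans (E4.trans (finProdEquiv a n))))⟩⟩
end Aux

/-- If `C_*` is a chain complex of finitely generated free `Λ`-modules (bounded below at
degree `0`, with `d i : C (i+1) → C i` representing `∂_{i+1}`) and `H_i(C_*) = 0` for all
`i ≤ k`, then `ker ∂_i` is finitely generated and stably free for all `i ≤ k + 1`.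
(Here `ker ∂_0 = C 0`, and `ker ∂_{i+1} = ker (d i)` for `i ≤ k`.) -/
theorem kernels_stablyFree_of_acyclic (Λ : Type*) [Ring Λ] (k : ℕ)
    (C : ℕ → Type*) [∀ i, AddCommGroup (C i)] [∀ i, Module Λ (C i)]
    [∀ i, Module.Finite Λ (C i)] [∀ i, Module.Free Λ (C i)]
    (d : ∀ i, C (i + 1) →ₗ[Λ] C i)
    (hdd : ∀ i, (d i).comp (d (i + 1)) = 0)
    (h0 : Function.Surjective (d 0))
    (hex : ∀ i < k, LinearMap.ker (d i) ≤ LinearMap.range (d (i + 1))) :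
    (Module.Finite Λ (C 0) ∧ StablyFree Λ (C 0)) ∧
      ∀ i ≤ k, Module.Finite Λ (LinearMap.ker (d i)) ∧
        StablyFree Λ (LinearMap.ker (d i)) := by
  obtain ⟨m0, ⟨e0⟩⟩ := exists_equiv_fin (Λ := Λ) (C 0)
  have base : Module.Finite Λ (C 0) ∧ StablyFree Λ (C 0) :=
    ⟨inferInstance, stablyFree_of_equiv_fun m0 e0⟩
  refine ⟨base, ?_⟩
  intro i
  induction i with
  | zero => exact fun _ => key (d 0) h0 base.2
  | succ i ih =>
    intro hik
    have hik' : i < k := hik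
    obtain ⟨fin, sf⟩ := ih hik'.le
    have hmem : ∀ x, d (i + 1) x ∈ LinearMap.ker (d i) := by
      intro x
      have := congrFun (congrArg DFunLike.coe (hdd i)) x
      simpa using this
    set f : C (i + 2) →ₗ[Λ] LinearMap.ker (d i) :=
      (d (i + 1)).codRestrict (LinearMap.ker (d i)) hmem with hf
    have hfsurj : Function.Surjective f := by
      rintro ⟨y, hy⟩
      obtain ⟨x, hx⟩ := hex i hik' hy
      exact ⟨x, Subtype.ext (by simpa [hf, LinearMap.codRestrict] using hx)⟩
    have hker : LinearMap.ker f = LinearMap.ker (d (i + 1)) :=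
      LinearMap.ker_codRestrict _ _ hmem
    have := key f hfsurj sf
    rwa [hker] at this
end

section
/- Let Λ be a ring and C_* a chain complex of finitely generated free Λ-modules (bounded below at degree 0). If H_i(C_*) = 0 for all i ≤ k, then H_{k+1}(C_*) is a finitely generated Λ-module. -/
/-- The kernel of a surjection from a finite module onto a projective module is
finite and projective. -/
lemma ker_fin_proj_of_surj_onto_proj {Λ : Type*} [Ring Λ]
    {M N : Type*} [AddCommGroup M] [Module Λ M] [AddCommGroup N] [Module Λ N]
    [Module.Finite Λ M] [Module.Projective Λ M] [Module.Projective Λ N]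
    (f : M →ₗ[Λ] N) (hf : Function.Surjective f) :
    Module.Finite Λ (LinearMap.ker f) ∧ Module.Projective Λ (LinearMap.ker f) := by
  obtain ⟨s, hs⟩ := f.exists_rightInverse_of_surjective (LinearMap.range_eq_top.2 hf)
  set π : M →ₗ[Λ] M := LinearMap.id - s ∘ₗ f with hπ
  have hπker : ∀ x : M, π x ∈ LinearMap.ker f := by
    intro x
    simp only [LinearMap.mem_ker, hπ, LinearMap.sub_apply, LinearMap.id_apply,
      LinearMap.comp_apply, map_sub]
    have := congrArg (fun g : N →ₗ[Λ] N => g (f x)) hs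
    simp only [LinearMap.comp_apply, LinearMap.id_apply] at this
    rw [this]; exact sub_self _
  set p : M →ₗ[Λ] LinearMap.ker f := LinearMap.codRestrict _ π hπker with hp
  have hps : p ∘ₗ (LinearMap.ker f).subtype = LinearMap.id := by
    ext ⟨x, hx⟩
    simp [hp, hπ, LinearMap.mem_ker.mp hx]
  have hpsurj : Function.Surjective p := fun y => ⟨y.1, by
    have := congrArg (fun g : _ →ₗ[Λ] _ => g y) hps
    simpa using this⟩
  exact ⟨Module.Finite.of_surjective p hpsurj,
    Module.Projective.of_split (LinearMap.ker f).subtype p hps⟩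

/-- If `C_*` is a chain complex of finitely generated free `Λ`-modules (bounded below at
degree `0`, with `d i : C (i+1) → C i` representing `∂_{i+1}`) and `H_i(C_*) = 0` for all
`i ≤ k`, then `H_{k+1}(C_*) = ker ∂_{k+1} / im ∂_{k+2}` is a finitely generated `Λ`-module. -/
theorem homology_fg_of_acyclic_below (Λ : Type*) [Ring Λ] (k : ℕ)
    (C : ℕ → Type*) [∀ i, AddCommGroup (C i)] [∀ i, Module Λ (C i)]
    [∀ i, Module.Finite Λ (C i)] [∀ i, Module.Free Λ (C i)]
    (d : ∀ i, C (i + 1) →ₗ[Λ] C i)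
    (hdd : ∀ i, (d i).comp (d (i + 1)) = 0)
    (h0 : Function.Surjective (d 0))
    (hex : ∀ i < k, LinearMap.ker (d i) ≤ LinearMap.range (d (i + 1))) :
    Module.Finite Λ
      (↥(LinearMap.ker (d k)) ⧸
        (Submodule.comap (LinearMap.ker (d k)).subtype (LinearMap.range (d (k + 1))))) := by
  -- By induction, ker (d i) is finite and projective for all i ≤ k.
  have key : ∀ i ≤ k, Module.Finite Λ (LinearMap.ker (d i)) ∧
      Module.Projective Λ (LinearMap.ker (d i)) := by
    intro i hi
    induction i with
    | zero => exact ker_fin_proj_of_surj_onto_proj (d 0) h0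
    | succ n ih =>
      obtain ⟨hfin, hproj⟩ := ih (Nat.le_of_succ_le hi)
      -- corestrict d (n+1) to ker (d n)
      have hmem : ∀ x, d (n + 1) x ∈ LinearMap.ker (d n) := by
        intro x
        have := congrArg (fun g : _ →ₗ[Λ] _ => g x) (hdd n)
        simpa [LinearMap.mem_ker] using this
      set f : C (n + 2) →ₗ[Λ] LinearMap.ker (d n) :=
        LinearMap.codRestrict _ (d (n + 1)) hmem with hf
      have hfsurj : Function.Surjective f := by
        rintro ⟨y, hy⟩
        obtain ⟨x, hx⟩ := hex n (Nat.lt_of_succ_le hi) hy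
        exact ⟨x, Subtype.ext hx⟩
      have hker : LinearMap.ker f = LinearMap.ker (d (n + 1)) := by
        ext x
        simp [hf, LinearMap.mem_ker, Subtype.ext_iff]
      have := ker_fin_proj_of_surj_onto_proj (Λ := Λ) f hfsurj
      rwa [hker] at this
  have hfin : Module.Finite Λ (LinearMap.ker (d k)) := (key k le_rfl).1
  exact Module.Finite.quotient Λ _
end
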